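/- Let 0 < α < 1 and x > 0. Then ∫_0^x f(t) dt = (sin(πα)/π) ∫_0^x (x-t)^{α-1} ( ∫_0^t (t-τ)^{-α} f(τ) dτ ) dt for every continuous function f on [0, x]. -/

import Mathlib

open intervalIntegral Real MeasureTheory Set

lemma beta01 {α : ℝ} (hα0 : 0 < α) (hα1 : α < 1) :
    ∫ s in (0:ℝ)..1, s ^ (-α) * (1 - s) ^ (α - 1) = Real.pi / Real.sin (Real.pi * α) := by
  have h := Complex.Gamma_mul_Gamma_eq_betaIntegral (s := ((1 - α : ℝ) : ℂ)) (t := ((α : ℝ) : ℂ))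
    (by simp; linarith) (by simpa using hα0)
  have h1 : ((1 - α : ℝ) : ℂ) + ((α : ℝ) : ℂ) = 1 := by push_cast; ring
  rw [h1, Complex.Gamma_one, one_mul, Complex.Gamma_ofReal, Complex.Gamma_ofReal,
    ← Complex.ofReal_mul] at h
  have h2 : Complex.betaIntegral ((1 - α : ℝ) : ℂ) ((α : ℝ) : ℂ)
      = ((∫ s in (0:ℝ)..1, s ^ (-α) * (1 - s) ^ (α - 1) : ℝ) : ℂ) := by
    rw [Complex.betaIntegral, ← intervalIntegral.integral_ofReal]
    refine intervalIntegral.integral_congr fun s hs => ?_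
    rw [Set.uIcc_of_le zero_le_one] at hs
    have e1 : ((1 - α : ℝ) : ℂ) - 1 = ((-α : ℝ) : ℂ) := by push_cast; ring
    have e2 : ((α : ℝ) : ℂ) - 1 = ((α - 1 : ℝ) : ℂ) := by push_cast; ring
    have e3 : (1 : ℂ) - (s : ℂ) = ((1 - s : ℝ) : ℂ) := by push_cast; ring
    rw [e1, e2, e3, Complex.ofReal_mul, ← Complex.ofReal_cpow hs.1,
      ← Complex.ofReal_cpow (by linarith [hs.2] : (0:ℝ) ≤ 1 - s)]
  rw [h2] at h
  have h3 : Real.Gamma (1 - α) * Real.Gamma α = Real.pi / Real.sin (Real.pi * α) := by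
    rw [mul_comm]; exact Real.Gamma_mul_Gamma_one_sub α
  rw [h3] at h
  exact_mod_cast h.symm

lemma betaKernel {α x τ : ℝ} (hα0 : 0 < α) (hα1 : α < 1) (hτ : τ < x) :
    ∫ t in τ..x, (x - t) ^ (α - 1) * (t - τ) ^ (-α) = Real.pi / Real.sin (Real.pi * α) := by
  set c := x - τ with hc
  have hc0 : 0 < c := by simp [hc]; linarith
  have key := intervalIntegral.mul_integral_comp_mul_add
    (a := (0:ℝ)) (b := 1) (f := fun t => (x - t) ^ (α - 1) * (t - τ) ^ (-α)) c τ
  have h01 : c * (0:ℝ) + τ = τ := by ring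
  have h11 : c * (1:ℝ) + τ = x := by simp [hc]
  rw [h01, h11] at key
  rw [← key]
  have congr1 : ∀ s ∈ Set.uIcc (0:ℝ) 1,
      (x - (c * s + τ)) ^ (α - 1) * ((c * s + τ) - τ) ^ (-α)
      = (c ^ (α - 1) * c ^ (-α)) * (s ^ (-α) * (1 - s) ^ (α - 1)) := by
    intro s hs
    rw [Set.uIcc_of_le zero_le_one] at hs
    have e1 : x - (c * s + τ) = c * (1 - s) := by simp [hc]; ring
    have e2 : (c * s + τ) - τ = c * s := by ring
    rw [e1, e2, Real.mul_rpow hc0.le (by linarith [hs.2]), Real.mul_rpow hc0.le hs.1]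
    ring
  rw [intervalIntegral.integral_congr congr1, intervalIntegral.integral_const_mul,
    beta01 hα0 hα1]
  have : c * (c ^ (α - 1) * c ^ (-α)) = 1 := by
    rw [← Real.rpow_add hc0]
    have : α - 1 + -α = -1 := by ring
    rw [this, Real.rpow_neg_one]
    exact mul_inv_cancel₀ hc0.ne'
  rw [← mul_assoc, this, one_mul]

lemma rpow_int_eval {α t : ℝ} (hα1 : α < 1) :
    ∫ τ in (0:ℝ)..t, (t - τ) ^ (-α) = t ^ (1 - α) / (1 - α) := by
  rw [intervalIntegral.integral_comp_sub_left (fun s => s ^ (-α)) t]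
  simp only [sub_self, sub_zero]
  rw [integral_rpow (Or.inl (by linarith))]
  rw [Real.zero_rpow (by intro h; rw [neg_add_eq_zero] at h; linarith : -α + 1 ≠ 0)]
  have : -α + 1 = 1 - α := by ring
  rw [this]
  ring

lemma kernelIntegrable {α t : ℝ} (hα1 : α < 1) (f : ℝ → ℝ)
    (hf : Continuous f) :
    IntervalIntegrable (fun τ => (t - τ) ^ (-α) * f τ) volume 0 t := by
  have h1 : IntervalIntegrable (fun τ : ℝ => (t - τ) ^ (-α)) volume 0 t := by
    have := (intervalIntegral.intervalIntegrable_rpow' (a := 0) (b := t)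
      (by linarith : (-1:ℝ) < -α)).comp_sub_left t
    simpa using this.symm
  exact h1.mul_continuousOn hf.continuousOn

lemma abel_aux {α x : ℝ} (hα0 : 0 < α) (hα1 : α < 1) (hx : 0 < x)
    (f : ℝ → ℝ) (hf : Continuous f) :
    (∫ t in (0:ℝ)..x, (x - t) ^ (α - 1) * (∫ τ in (0:ℝ)..t, (t - τ) ^ (-α) * f τ))
      = (Real.pi / Real.sin (Real.pi * α)) * ∫ t in (0:ℝ)..x, f t := by
  obtain ⟨M, hM⟩ := (isCompact_Icc (a := (0:ℝ)) (b := x)).exists_bound_of_continuousOn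
    hf.continuousOn
  have hM0 : 0 ≤ M := le_trans (norm_nonneg _) (hM 0 ⟨le_refl _, hx.le⟩)
  set T : Set (ℝ × ℝ) := {p | 0 < p.2 ∧ p.2 < p.1 ∧ p.1 < x} with hTdef
  set K : ℝ × ℝ → ℝ := fun p => (x - p.1) ^ (α - 1) * ((p.1 - p.2) ^ (-α) * f p.2) with hKdef
  set F : ℝ × ℝ → ℝ := T.indicator K with hFdef
  have hT : MeasurableSet T := by
    have : T = {p : ℝ × ℝ | 0 < p.2} ∩ ({p | p.2 < p.1} ∩ {p | p.1 < x}) := rfl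
    rw [this]
    exact (measurableSet_lt measurable_const measurable_snd).inter
      ((measurableSet_lt measurable_snd measurable_fst).inter
        (measurableSet_lt measurable_fst measurable_const))
  have hK : Measurable K :=
    ((measurable_const.sub measurable_fst).pow_const (α - 1)).mul
      (((measurable_fst.sub measurable_snd).pow_const (-α)).mul
        (hf.measurable.comp measurable_snd))
  have hF : Measurable F := hK.indicator hT
  -- slice descriptions (pointwise)
  have slice_t : ∀ t ∈ Ioo (0:ℝ) x, ∀ τ, F (t, τ) =
      (Ioo (0:ℝ) t).indicator (fun τ => (x - t) ^ (α - 1) * ((t - τ) ^ (-α) * f τ)) τ := by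
    intro t ht τ
    by_cases h : τ ∈ Ioo (0:ℝ) t
    · rw [Set.indicator_of_mem h, hFdef,
        Set.indicator_of_mem (show (t, τ) ∈ T from ⟨h.1, h.2, ht.2⟩)]
    · rw [Set.indicator_of_notMem h, hFdef,
        Set.indicator_of_notMem (fun hm => h ⟨hm.1, hm.2.1⟩)]
  have slice_t0 : ∀ t, t ∉ Ioo (0:ℝ) x → ∀ τ, F (t, τ) = 0 := fun t ht τ =>
    Set.indicator_of_notMem (fun hm => ht ⟨lt_trans hm.1 hm.2.1, hm.2.2⟩) _
  have slice_τ : ∀ τ ∈ Ioo (0:ℝ) x, ∀ t, F (t, τ) =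
      (Ioo τ x).indicator (fun t => (x - t) ^ (α - 1) * ((t - τ) ^ (-α) * f τ)) t := by
    intro τ hτ t
    by_cases h : t ∈ Ioo τ x
    · rw [Set.indicator_of_mem h, hFdef,
        Set.indicator_of_mem (show (t, τ) ∈ T from ⟨hτ.1, h.1, h.2⟩)]
    · rw [Set.indicator_of_notMem h, hFdef,
        Set.indicator_of_notMem (fun hm => h ⟨hm.2.1, hm.2.2⟩)]
  have slice_τ0 : ∀ τ, τ ∉ Ioo (0:ℝ) x → ∀ t, F (t, τ) = 0 := fun τ hτ t =>
    Set.indicator_of_notMem (fun hm => hτ ⟨hm.1, lt_trans hm.2.1 hm.2.2⟩) _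
  -- integrability of the τ-slices
  have int_g : ∀ t, IntegrableOn
      (fun τ => (x - t) ^ (α - 1) * ((t - τ) ^ (-α) * f τ)) (Ioo (0:ℝ) t) volume := by
    intro t
    rcases le_or_gt t 0 with h | h
    · exact IntegrableOn.mono_set (integrableOn_empty (f := _)) (by rw [Ioo_eq_empty (by linarith)])
    · refine IntegrableOn.mono_set ?_ Ioo_subset_Ioc_self
      rw [← intervalIntegrable_iff_integrableOn_Ioc_of_le h.le]
      exact (kernelIntegrable hα1 f hf).const_mul _
  have int_slice : ∀ t, Integrable (fun τ => F (t, τ)) volume := by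
    intro t
    by_cases ht : t ∈ Ioo (0:ℝ) x
    · have : (fun τ => F (t, τ)) = (Ioo (0:ℝ) t).indicator
        (fun τ => (x - t) ^ (α - 1) * ((t - τ) ^ (-α) * f τ)) := funext (slice_t t ht)
      rw [this, integrable_indicator_iff measurableSet_Ioo]
      exact int_g t
    · simp only [slice_t0 t ht]
      exact integrable_zero _ _ _
  -- bound on norm integrals
  set C : ℝ := M * (x ^ (1 - α) / (1 - α)) with hCdef
  have hC0 : 0 ≤ C :=
    mul_nonneg hM0 (div_nonneg (Real.rpow_nonneg hx.le _) (by linarith))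
  have norm_int_bound : ∀ t ∈ Ioo (0:ℝ) x,
      (∫ τ, ‖F (t, τ)‖) ≤ C * (x - t) ^ (α - 1) := by
    intro t ht
    have hxt : (0:ℝ) ≤ (x - t) ^ (α - 1) := Real.rpow_nonneg (by linarith [ht.2]) _
    have key : (∫ τ, ‖F (t, τ)‖)
        = ∫ τ in Ioo (0:ℝ) t, ‖(x - t) ^ (α - 1) * ((t - τ) ^ (-α) * f τ)‖ := by
      simp only [slice_t t ht, norm_indicator_eq_indicator_norm]
      exact MeasureTheory.integral_indicator measurableSet_Ioo
    rw [key]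
    have hb : IntegrableOn (fun τ => ((x - t) ^ (α - 1) * M) * (t - τ) ^ (-α))
        (Ioo (0:ℝ) t) volume := by
      refine IntegrableOn.mono_set ?_ Ioo_subset_Ioc_self
      rw [← intervalIntegrable_iff_integrableOn_Ioc_of_le ht.1.le]
      have h1 : IntervalIntegrable (fun τ : ℝ => (t - τ) ^ (-α)) volume 0 t := by
        have := (intervalIntegral.intervalIntegrable_rpow' (a := 0) (b := t)
          (by linarith : (-1:ℝ) < -α)).comp_sub_left t
        simpa using this.symm
      exact h1.const_mul _
    have mono := setIntegral_mono_on ((int_g t).norm) hb measurableSet_Ioo ?_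
    · refine le_trans mono ?_
      have : ∫ τ in Ioo (0:ℝ) t, ((x - t) ^ (α - 1) * M) * (t - τ) ^ (-α)
          = ((x - t) ^ (α - 1) * M) * (t ^ (1 - α) / (1 - α)) := by
        rw [← integral_Ioc_eq_integral_Ioo, ← intervalIntegral.integral_of_le ht.1.le,
          intervalIntegral.integral_const_mul, rpow_int_eval hα1]
      rw [this, hCdef]
      have ht1 : t ^ (1 - α) ≤ x ^ (1 - α) :=
        Real.rpow_le_rpow ht.1.le ht.2.le (by linarith)
      have h2 : t ^ (1 - α) / (1 - α) ≤ x ^ (1 - α) / (1 - α) :=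
        (div_le_div_iff_of_pos_right (by linarith : (0:ℝ) < 1 - α)).mpr ht1
      calc ((x - t) ^ (α - 1) * M) * (t ^ (1 - α) / (1 - α))
          = (M * (t ^ (1 - α) / (1 - α))) * (x - t) ^ (α - 1) := by ring
        _ ≤ (M * (x ^ (1 - α) / (1 - α))) * (x - t) ^ (α - 1) :=
            mul_le_mul_of_nonneg_right (mul_le_mul_of_nonneg_left h2 hM0) hxt
    · intro τ hτ
      have h1 : ‖(x - t) ^ (α - 1)‖ = (x - t) ^ (α - 1) := abs_of_nonneg hxt
      have h2 : ‖(t - τ) ^ (-α)‖ = (t - τ) ^ (-α) :=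
        abs_of_nonneg (Real.rpow_nonneg (by linarith [hτ.2]) _)
      rw [norm_mul, norm_mul, h1, h2]
      have h3 : ‖f τ‖ ≤ M := hM τ ⟨hτ.1.le, by linarith [hτ.2, ht.2]⟩
      calc (x - t) ^ (α - 1) * ((t - τ) ^ (-α) * ‖f τ‖)
          ≤ (x - t) ^ (α - 1) * ((t - τ) ^ (-α) * M) := by
            apply mul_le_mul_of_nonneg_left _ hxt
            exact mul_le_mul_of_nonneg_left h3 (Real.rpow_nonneg (by linarith [hτ.2]) _)
        _ = ((x - t) ^ (α - 1) * M) * (t - τ) ^ (-α) := by ring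
  -- measurability of the norm-integral function
  have hGm : StronglyMeasurable (fun t => ∫ τ, ‖F (t, τ)‖) :=
    hF.norm.stronglyMeasurable.integral_prod_right'
  -- integrable bound
  have bound_int : Integrable ((Ioo (0:ℝ) x).indicator (fun t => C * (x - t) ^ (α - 1))) volume := by
    rw [integrable_indicator_iff measurableSet_Ioo]
    refine IntegrableOn.mono_set ?_ Ioo_subset_Ioc_self
    rw [← intervalIntegrable_iff_integrableOn_Ioc_of_le hx.le]
    have h1 : IntervalIntegrable (fun t : ℝ => (x - t) ^ (α - 1)) volume 0 x := by
      have := (intervalIntegral.intervalIntegrable_rpow' (a := 0) (b := x)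
        (by linarith : (-1:ℝ) < α - 1)).comp_sub_left x
      simpa using this.symm
    exact h1.const_mul _
  have hGint : Integrable (fun t => ∫ τ, ‖F (t, τ)‖) volume := by
    refine Integrable.mono' bound_int hGm.aestronglyMeasurable (ae_of_all _ fun t => ?_)
    have hnn : 0 ≤ ∫ τ, ‖F (t, τ)‖ := integral_nonneg fun τ => norm_nonneg _
    rw [Real.norm_of_nonneg hnn]
    by_cases ht : t ∈ Ioo (0:ℝ) x
    · rw [Set.indicator_of_mem ht]
      exact norm_int_bound t ht
    · rw [Set.indicator_of_notMem ht]
      simp only [slice_t0 t ht]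
      simp
  -- product integrability and Fubini
  have prodInt : Integrable F (volume.prod volume) :=
    (integrable_prod_iff hF.aestronglyMeasurable).2
      ⟨ae_of_all _ int_slice, hGint⟩
  have swap : (∫ t, ∫ τ, F (t, τ)) = ∫ τ, ∫ t, F (t, τ) :=
    integral_integral_swap (f := fun t τ => F (t, τ)) prodInt
  -- identify the LHS
  have L1 : ∀ t ∈ Ioo (0:ℝ) x, (∫ τ, F (t, τ))
      = (x - t) ^ (α - 1) * ∫ τ in (0:ℝ)..t, (t - τ) ^ (-α) * f τ := by
    intro t ht
    have e1 : (∫ τ, F (t, τ)) = ∫ τ in Ioo (0:ℝ) t,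
        (x - t) ^ (α - 1) * ((t - τ) ^ (-α) * f τ) := by
      simp only [slice_t t ht]
      exact MeasureTheory.integral_indicator measurableSet_Ioo
    rw [e1, ← integral_Ioc_eq_integral_Ioo, ← intervalIntegral.integral_of_le ht.1.le,
      intervalIntegral.integral_const_mul]
  have LHSeq : (∫ t in (0:ℝ)..x, (x - t) ^ (α - 1)
      * (∫ τ in (0:ℝ)..t, (t - τ) ^ (-α) * f τ)) = ∫ t, ∫ τ, F (t, τ) := by
    have e0 : (fun t => ∫ τ, F (t, τ))
        = (Ioo (0:ℝ) x).indicator (fun t => ∫ τ, F (t, τ)) := by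
      funext t
      by_cases ht : t ∈ Ioo (0:ℝ) x
      · rw [Set.indicator_of_mem ht]
      · rw [Set.indicator_of_notMem ht]
        simp only [slice_t0 t ht]
        simp
    rw [e0, MeasureTheory.integral_indicator measurableSet_Ioo,
      intervalIntegral.integral_of_le hx.le, integral_Ioc_eq_integral_Ioo]
    exact setIntegral_congr_fun measurableSet_Ioo fun t ht => (L1 t ht).symm
  -- identify the RHS
  have R1 : ∀ τ ∈ Ioo (0:ℝ) x, (∫ t, F (t, τ))
      = (Real.pi / Real.sin (Real.pi * α)) * f τ := by
    intro τ hτ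
    have e1 : (∫ t, F (t, τ)) = ∫ t in Ioo τ x,
        (x - t) ^ (α - 1) * ((t - τ) ^ (-α) * f τ) := by
      simp only [slice_τ τ hτ]
      exact MeasureTheory.integral_indicator measurableSet_Ioo
    rw [e1, ← integral_Ioc_eq_integral_Ioo, ← intervalIntegral.integral_of_le hτ.2.le]
    have e2 : ∀ t ∈ Set.uIcc τ x,
        (x - t) ^ (α - 1) * ((t - τ) ^ (-α) * f τ)
        = ((x - t) ^ (α - 1) * (t - τ) ^ (-α)) * f τ := fun t _ => by ring
    rw [intervalIntegral.integral_congr e2, intervalIntegral.integral_mul_const,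
      betaKernel hα0 hα1 hτ.2, mul_comm]
  have RHSeq : (∫ τ, ∫ t, F (t, τ))
      = (Real.pi / Real.sin (Real.pi * α)) * ∫ t in (0:ℝ)..x, f t := by
    have e0 : (fun τ => ∫ t, F (t, τ))
        = (Ioo (0:ℝ) x).indicator (fun τ => ∫ t, F (t, τ)) := by
      funext τ
      by_cases hτ : τ ∈ Ioo (0:ℝ) x
      · rw [Set.indicator_of_mem hτ]
      · rw [Set.indicator_of_notMem hτ]
        simp only [slice_τ0 τ hτ]
        simp
    rw [e0, MeasureTheory.integral_indicator measurableSet_Ioo]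
    have e1 : ∫ τ in Ioo (0:ℝ) x, (∫ t, F (t, τ))
        = ∫ τ in Ioo (0:ℝ) x, (Real.pi / Real.sin (Real.pi * α)) * f τ :=
      setIntegral_congr_fun measurableSet_Ioo fun τ hτ => R1 τ hτ
    rw [e1, MeasureTheory.integral_const_mul, intervalIntegral.integral_of_le hx.le,
      integral_Ioc_eq_integral_Ioo]
  rw [LHSeq, swap, RHSeq]

theorem abel_identity
    (α x : ℝ) (hα0 : 0 < α) (hα1 : α < 1) (hx : 0 < x)
    (f : ℝ → ℝ) (hf : ContinuousOn f (Set.Icc 0 x)) :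
    (∫ t in (0:ℝ)..x, f t) =
      (Real.sin (Real.pi * α) / Real.pi) *
        ∫ t in (0:ℝ)..x, (x - t) ^ (α - 1) *
          (∫ τ in (0:ℝ)..t, (t - τ) ^ (-α) * f τ) := by
  set g : ℝ → ℝ := fun y => f (max 0 (min y x)) with hgdef
  have hgc : Continuous g := hf.comp_continuous
    (continuous_const.max (continuous_id.min continuous_const))
    (fun y => ⟨le_max_left _ _, max_le hx.le (min_le_right y x)⟩)
  have hge : ∀ y ∈ Set.Icc (0:ℝ) x, g y = f y := by
    intro y hy
    rw [hgdef]
    simp only [min_eq_left hy.2, max_eq_right hy.1]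
  have key := abel_aux hα0 hα1 hx g hgc
  have e1 : (∫ t in (0:ℝ)..x, f t) = ∫ t in (0:ℝ)..x, g t := by
    refine intervalIntegral.integral_congr fun t ht => ?_
    rw [Set.uIcc_of_le hx.le] at ht
    exact (hge t ht).symm
  have e2 : (∫ t in (0:ℝ)..x, (x - t) ^ (α - 1) *
          (∫ τ in (0:ℝ)..t, (t - τ) ^ (-α) * f τ))
      = ∫ t in (0:ℝ)..x, (x - t) ^ (α - 1) *
          (∫ τ in (0:ℝ)..t, (t - τ) ^ (-α) * g τ) := by
    refine intervalIntegral.integral_congr fun t ht => ?_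
    rw [Set.uIcc_of_le hx.le] at ht
    congr 1
    refine intervalIntegral.integral_congr fun τ hτ => ?_
    rw [Set.uIcc_of_le ht.1] at hτ
    congr 1
    exact (hge τ ⟨hτ.1, le_trans hτ.2 ht.2⟩).symm
  have hsin : Real.sin (Real.pi * α) ≠ 0 := by
    refine ne_of_gt (Real.sin_pos_of_pos_of_lt_pi (by positivity) ?_)
    nlinarith [Real.pi_pos]
  rw [e1, e2, key, ← mul_assoc]
  have : Real.sin (Real.pi * α) / Real.pi * (Real.pi / Real.sin (Real.pi * α)) = 1 := by
    field_simp
  rw [this, one_mul]
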